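/- Let H_{1,n}(k) = Σ_{j=0}^{n} C(n,j)·C(k+n−j, n) and H_{2,n}(k) be the polynomial whose generating function is Σ_{k≥0} H_{2,n}(k) t^k = (1+t)^{n−1}(1+2nt+t²)/(1−t)^{n+2}. Then for all n ≥ 1 the identity H_{2,n}(k) = (1/2)(2k+1)·H_{1,n}(k) + (1/2)·H_{1,n−1}(k) holds as polynomials in k. -/

import Mathlib

open PowerSeries

open Finset

noncomputable def Cd (d : ℕ) : PowerSeries ℚ := PowerSeries.mk fun k => ((d + k).choose d : ℚ)

lemma Cd_mul (d : ℕ) : Cd d * (1 - X) ^ (d + 1) = 1 :=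
  mk_add_choose_mul_one_sub_pow_eq_one ℚ d

lemma mk_choose_shift (d j : ℕ) (hj : j ≤ d) :
    (PowerSeries.mk fun k => ((k + d - j).choose d : ℚ)) = X ^ j * Cd d := by
  ext k
  rw [PowerSeries.coeff_mk, coeff_X_pow_mul']
  split_ifs with h
  · rw [Cd, PowerSeries.coeff_mk]
    norm_cast
    congr 1
    omega
  · rw [Nat.choose_eq_zero_of_lt (by omega)]
    norm_num

lemma mk_sum {ι : Type*} (s : Finset ι) (f : ι → ℕ → ℚ) :
    PowerSeries.mk (fun k => ∑ j ∈ s, f j k) = ∑ j ∈ s, PowerSeries.mk (f j) := by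
  ext k; simp

lemma mk_const_mul (c : ℚ) (f : ℕ → ℚ) :
    PowerSeries.mk (fun k => c * f k) = PowerSeries.C c * PowerSeries.mk f := by
  ext k; simp

lemma mk_lin (c1 c2 : ℚ) (f g : ℕ → ℚ) :
    PowerSeries.mk (fun k => c1 * f k + c2 * g k)
      = PowerSeries.C c1 * PowerSeries.mk f + PowerSeries.C c2 * PowerSeries.mk g := by
  ext k; simp

lemma one_add_X_pow (n : ℕ) :
    ((1 : PowerSeries ℚ) + X) ^ n = ∑ j ∈ range (n + 1), (n.choose j : PowerSeries ℚ) * X ^ j := by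
  rw [add_comm, add_pow]
  refine Finset.sum_congr rfl fun j _ => ?_
  ring

/-- `H_{1,n}(k) = ∑_{j=0}^{n} C(n,j) C(k+n-j, n)`. -/
def H1 (n k : ℕ) : ℕ := ∑ j ∈ Finset.range (n + 1), n.choose j * (k + n - j).choose n

lemma H1_series (n : ℕ) :
    (PowerSeries.mk fun k => (H1 n k : ℚ)) = (1 + X) ^ n * Cd n := by
  have h1 : (PowerSeries.mk fun k => (H1 n k : ℚ))
      = ∑ j ∈ range (n + 1),
          PowerSeries.mk (fun k => (n.choose j : ℚ) * ((k + n - j).choose n : ℚ)) := by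
    rw [← mk_sum]
    refine congrArg _ (funext fun k => ?_)
    simp only [H1]
    push_cast
    rfl
  rw [h1, one_add_X_pow, Finset.sum_mul]
  refine Finset.sum_congr rfl fun j hj => ?_
  rw [mk_const_mul, mk_choose_shift n j (Nat.lt_succ_iff.mp (mem_range.mp hj)), ← mul_assoc]
  norm_cast

lemma key_pointwise (n j k : ℕ) (hj : j ≤ n) :
    ((2 * k + 1) * (k + n - j).choose n : ℚ)
      = (2 * j + 1) * (k + n - j).choose n + 2 * (n + 1) * (k + n - j).choose (n + 1) := by
  rcases le_or_gt j k with h | h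
  · have h1 := Nat.choose_succ_right_eq (k + n - j) n
    have h2 : k + n - j - n = k - j := by omega
    rw [h2] at h1
    have hq : ((k + n - j).choose (n + 1) : ℚ) * (n + 1)
        = (k + n - j).choose n * ((k : ℚ) - j) := by
      have := congrArg (Nat.cast : ℕ → ℚ) h1
      push_cast [Nat.cast_sub h] at this
      linarith [this]
    linear_combination (-2 : ℚ) * hq
  · rw [Nat.choose_eq_zero_of_lt (show k + n - j < n by omega),
      Nat.choose_eq_zero_of_lt (show k + n - j < n + 1 by omega)]
    norm_num

lemma jsum (m : ℕ) :
    ∑ j ∈ range (m + 2), ((j * (m + 1).choose j : ℕ) : PowerSeries ℚ) * X ^ j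
      = ((m : PowerSeries ℚ) + 1) * (X * (1 + X) ^ m) := by
  rw [Finset.sum_range_succ']
  simp only [Nat.zero_eq, zero_mul, Nat.cast_zero, pow_zero, mul_one, add_zero]
  have hcomm : ∀ i : ℕ, (i + 1) * (m + 1).choose (i + 1) = (m + 1) * m.choose i := by
    intro i
    rw [mul_comm ((i+1)) _, Nat.add_one_mul_choose_eq m i, mul_comm]
  have hterm : ∀ i ∈ range (m + 1),
      (((i + 1) * (m + 1).choose (i + 1) : ℕ) : PowerSeries ℚ) * X ^ (i + 1)
        = ((m : PowerSeries ℚ) + 1) * (X * ((m.choose i : PowerSeries ℚ) * X ^ i)) := by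
    intro i _
    rw [hcomm i]
    push_cast
    ring
  rw [Finset.sum_congr rfl hterm, ← Finset.mul_sum]
  congr 1
  rw [one_add_X_pow, Finset.mul_sum]

lemma wsum (m : ℕ) :
    ∑ j ∈ range (m + 2), (((2 * j + 1) * (m + 1).choose j : ℕ) : PowerSeries ℚ) * X ^ j
      = (2 * (m : PowerSeries ℚ) + 2) * (X * (1 + X) ^ m) + (1 + X) ^ (m + 1) := by
  have hterm : ∀ j ∈ range (m + 2),
      (((2 * j + 1) * (m + 1).choose j : ℕ) : PowerSeries ℚ) * X ^ j
        = 2 * (((j * (m + 1).choose j : ℕ) : PowerSeries ℚ) * X ^ j)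
          + ((m + 1).choose j : PowerSeries ℚ) * X ^ j := by
    intro j _
    push_cast
    ring
  rw [Finset.sum_congr rfl hterm, Finset.sum_add_distrib, ← Finset.mul_sum, jsum,
    ← one_add_X_pow]
  ring

lemma xsum (m : ℕ) :
    ∑ j ∈ range (m + 2), (((m + 1).choose j : ℕ) : PowerSeries ℚ) * X ^ (j + 1)
      = X * (1 + X) ^ (m + 1) := by
  rw [one_add_X_pow, Finset.mul_sum]
  refine Finset.sum_congr rfl fun j _ => ?_
  ring

lemma T_series (m : ℕ) :
    (PowerSeries.mk fun k => ((2 * k + 1) * H1 (m + 1) k : ℚ))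
      = ((2 * (m : PowerSeries ℚ) + 2) * (X * (1 + X) ^ m) + (1 + X) ^ (m + 1)) * Cd (m + 1)
        + (2 * (m : PowerSeries ℚ) + 4) * (X * (1 + X) ^ (m + 1)) * Cd (m + 2) := by
  set n := m + 1 with hn
  have step1 : (PowerSeries.mk fun k => ((2 * k + 1) * H1 n k : ℚ))
      = ∑ j ∈ range (n + 1), PowerSeries.mk (fun k =>
          (((2 * j + 1) * (n.choose j) : ℕ) : ℚ) * ((k + n - j).choose n : ℚ)
            + ((2 * (n + 1) * (n.choose j) : ℕ) : ℚ) * ((k + n - j).choose (n + 1) : ℚ)) := by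
    rw [← mk_sum]
    refine congrArg _ (funext fun k => ?_)
    simp only [H1]
    push_cast
    rw [Finset.mul_sum]
    refine Finset.sum_congr rfl fun j hj => ?_
    have hkey := key_pointwise n j k (Nat.lt_succ_iff.mp (mem_range.mp hj))
    push_cast at hkey
    linear_combination (n.choose j : ℚ) * hkey
  have step2 : ∀ j ∈ range (n + 1), PowerSeries.mk (fun k =>
          (((2 * j + 1) * (n.choose j) : ℕ) : ℚ) * ((k + n - j).choose n : ℚ)
            + ((2 * (n + 1) * (n.choose j) : ℕ) : ℚ) * ((k + n - j).choose (n + 1) : ℚ))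
      = (((2 * j + 1) * (n.choose j) : ℕ) : PowerSeries ℚ) * X ^ j * Cd n
        + ((2 * (n + 1) * (n.choose j) : ℕ) : PowerSeries ℚ) * X ^ (j + 1) * Cd (n + 1) := by
    intro j hj
    have hjn : j ≤ n := Nat.lt_succ_iff.mp (mem_range.mp hj)
    have e2 : (PowerSeries.mk fun k => ((k + n - j).choose (n + 1) : ℚ))
        = X ^ (j + 1) * Cd (n + 1) := by
      have : (fun k => (((k + n - j).choose (n + 1) : ℕ) : ℚ))
          = fun k => (((k + (n + 1) - (j + 1)).choose (n + 1) : ℕ) : ℚ) := by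
        funext k
        norm_cast
        congr 1
        omega
      rw [this]
      exact mk_choose_shift (n + 1) (j + 1) (by omega)
    rw [mk_lin, mk_choose_shift n j hjn, e2]
    push_cast [PowerSeries.C_eq_algebraMap, map_ofNat]
    ring
  rw [step1, Finset.sum_congr rfl step2, Finset.sum_add_distrib, ← Finset.sum_mul,
    ← Finset.sum_mul]
  have r1 : ∑ j ∈ range (n + 1), (((2 * j + 1) * (n.choose j) : ℕ) : PowerSeries ℚ) * X ^ j
      = (2 * (m : PowerSeries ℚ) + 2) * (X * (1 + X) ^ m) + (1 + X) ^ (m + 1) := wsum m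
  have r2 : ∑ j ∈ range (n + 1), ((2 * (n + 1) * (n.choose j) : ℕ) : PowerSeries ℚ) * X ^ (j + 1)
      = (2 * (m : PowerSeries ℚ) + 4) * (X * (1 + X) ^ (m + 1)) := by
    have : ∀ j ∈ range (n + 1), ((2 * (n + 1) * (n.choose j) : ℕ) : PowerSeries ℚ) * X ^ (j + 1)
        = (2 * (m : PowerSeries ℚ) + 4) * ((((m + 1).choose j : ℕ) : PowerSeries ℚ) * X ^ (j + 1)) := by
      intro j _
      rw [hn]
      push_cast
      ring
    rw [Finset.sum_congr rfl this, ← Finset.mul_sum, xsum]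
  rw [r1, r2]

theorem H2n_relation_one (n : ℕ) (hn : 1 ≤ n) (H2 : Polynomial ℚ)
    (hH2 : (PowerSeries.mk fun k => H2.eval (k : ℚ)) * (1 - PowerSeries.X) ^ (n + 2)
        = (1 + PowerSeries.X) ^ (n - 1)
          * (1 + 2 * (n : ℚ) • PowerSeries.X + PowerSeries.X ^ 2)) :
    ∀ k : ℕ,
      H2.eval (k : ℚ)
        = (1/2 : ℚ) * (2 * k + 1) * (H1 n k : ℚ) + (1/2 : ℚ) * (H1 (n - 1) k : ℚ) := by
  obtain ⟨m, rfl⟩ : ∃ m, n = m + 1 := ⟨n - 1, by omega⟩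
  set F : PowerSeries ℚ := PowerSeries.mk fun k =>
    (1/2 : ℚ) * (2 * k + 1) * (H1 (m + 1) k : ℚ) + (1/2 : ℚ) * (H1 (m + 1 - 1) k : ℚ) with hFdef
  have hT : (PowerSeries.mk fun k => ((2 * k + 1) * H1 (m + 1) k : ℚ)) * (1 - X) ^ (m + 1 + 2)
      = ((2 * (m : PowerSeries ℚ) + 2) * (X * (1 + X) ^ m) + (1 + X) ^ (m + 1)) * (1 - X)
        + (2 * (m : PowerSeries ℚ) + 4) * (X * (1 + X) ^ (m + 1)) := by
    rw [T_series]
    have c1 := Cd_mul (m + 1)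
    have c2 := Cd_mul (m + 2)
    linear_combination (((2 * (m : PowerSeries ℚ) + 2) * (X * (1 + X) ^ m)
        + (1 + X) ^ (m + 1)) * (1 - X)) * c1
      + ((2 * (m : PowerSeries ℚ) + 4) * (X * (1 + X) ^ (m + 1))) * c2
  have hB : (PowerSeries.mk fun k => (H1 m k : ℚ)) * (1 - X) ^ (m + 1 + 2)
      = (1 + X) ^ m * (1 - X) ^ 2 := by
    rw [H1_series]
    linear_combination ((1 + X : PowerSeries ℚ) ^ m * (1 - X) ^ 2) * Cd_mul m
  have hsplit : F = PowerSeries.C (1/2)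
        * (PowerSeries.mk fun k => ((2 * k + 1) * H1 (m + 1) k : ℚ))
      + PowerSeries.C (1/2) * (PowerSeries.mk fun k => (H1 m k : ℚ)) := by
    ext k
    simp [hFdef]
    ring
  have h2 : PowerSeries.C (1/2 : ℚ) * 2 = 1 := by
    rw [← map_ofNat (PowerSeries.C (R := ℚ)) 2, ← map_mul]
    norm_num
  have hF : F * (1 - X) ^ (m + 1 + 2)
      = (1 + X) ^ m * (1 + (2 * (m : PowerSeries ℚ) + 2) * X + X ^ 2) := by
    rw [hsplit, add_mul, mul_assoc, mul_assoc, hT, hB]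
    set A := ((2 * (m : PowerSeries ℚ) + 2) * (X * (1 + X) ^ m) + (1 + X) ^ (m + 1)) * (1 - X)
      + (2 * (m : PowerSeries ℚ) + 4) * (X * (1 + X) ^ (m + 1)) with hA
    set B := ((1 + X : PowerSeries ℚ)) ^ m * (1 - X) ^ 2 with hBv
    have hsum : A + B = 2 * ((1 + X) ^ m * (1 + (2 * (m : PowerSeries ℚ) + 2) * X + X ^ 2)) := by
      rw [hA, hBv]
      ring
    linear_combination (PowerSeries.C (1/2)) * hsum
      + ((1 + X : PowerSeries ℚ) ^ m * (1 + (2 * (m : PowerSeries ℚ) + 2) * X + X ^ 2)) * h2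
  have hR : ((1 + X : PowerSeries ℚ)) ^ (m + 1 - 1)
        * (1 + 2 * ((m + 1 : ℕ) : ℚ) • X + X ^ 2)
      = (1 + X) ^ m * (1 + (2 * (m : PowerSeries ℚ) + 2) * X + X ^ 2) := by
    rw [Nat.add_sub_cancel, PowerSeries.smul_eq_C_mul, map_natCast]
    push_cast
    ring
  have hX : (1 - X : PowerSeries ℚ) ≠ 0 := fun h => by
    have := congrArg (PowerSeries.constantCoeff) h
    simp at this
  have hmk : (PowerSeries.mk fun k => H2.eval (k : ℚ)) = F :=
    mul_right_cancel₀ (pow_ne_zero _ hX) ((hH2.trans hR).trans hF.symm)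
  intro k
  have := congrArg (PowerSeries.coeff k) hmk
  simpa [hFdef] using this
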